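/- Let ⋯ → G_3 → G_2 → G_1 be an inverse system of finitely generated abelian groups indexed by the positive integers, with transition maps f_k : G_{k+1} → G_k. If for every prime number p the inverse limit of the induced system (G_k ⊗_ℤ ℤ_p, f_k ⊗ id) is the zero group, then the inverse limit of the system (G_k, f_k) is the zero group. Equivalently: if (x_k) is a family with x_k ∈ G_k and f_k(x_{k+1}) = x_k for all k, and for every prime p the image of each x_k in G_k ⊗_ℤ ℤ_p forms the zero element of the limit, then every x_k = 0. -/

import Mathlib

open DirectSum

/-- An integer divisible by every positive natural number is zero. -/
lemma int_eq_zero_of_forall_dvd (z : ℤ) (hz : ∀ n : ℕ, 0 < n → ∃ w, z = (n : ℤ) * w) :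
    z = 0 := by
  obtain ⟨w, hw⟩ := hz (z.natAbs + 1) (Nat.succ_pos _)
  have h := congrArg Int.natAbs hw
  rw [Int.natAbs_mul] at h
  simp only [Int.natAbs_natCast] at h
  rcases Nat.eq_zero_or_pos w.natAbs with h0 | hpos
  · rw [h0, Nat.mul_zero] at h
    exact Int.natAbs_eq_zero.mp h
  · have h2 : z.natAbs + 1 ≤ (z.natAbs + 1) * w.natAbs := Nat.le_mul_of_pos_right _ hpos
    omega

/-- An element of a finitely generated abelian group that is divisible by every positive
integer is zero. -/
lemma eq_zero_of_divisible {G : Type*} [AddCommGroup G] (hG : AddGroup.FG G)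
    (g : G) (hdvd : ∀ n : ℕ, 0 < n → ∃ h : G, g = (n : ℤ) • h) : g = 0 := by
  obtain ⟨n, ι, fι, p, hp, e, ⟨φ⟩⟩ := AddCommGroup.equiv_free_prod_directSum_zmod G
  have hfin : ∀ i : ι, Finite (ZMod (p i ^ e i)) := fun i => by
    have : NeZero (p i ^ e i) := ⟨pow_ne_zero _ (hp i).ne_zero⟩
    infer_instance
  have hD : Finite (⨁ i : ι, ZMod (p i ^ e i)) :=
    Finite.of_equiv _ DFinsupp.equivFunOnFintype.symm
  have hcard : 0 < Nat.card (⨁ i : ι, ZMod (p i ^ e i)) := Nat.card_pos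
  have hdvd' : ∀ m : ℕ, 0 < m → ∃ h, φ g = (m : ℤ) • h := fun m hm => by
    obtain ⟨h, hh⟩ := hdvd m hm
    exact ⟨φ h, by rw [hh, map_zsmul]⟩
  suffices hφ : φ g = 0 by simpa using congrArg φ.symm hφ
  have h1 : (φ g).1 = 0 := by
    ext i
    apply int_eq_zero_of_forall_dvd
    intro m hm
    obtain ⟨h, hh⟩ := hdvd' m hm
    exact ⟨h.1 i, by rw [hh]; simp⟩
  have h2 : (φ g).2 = 0 := by
    obtain ⟨h, hh⟩ := hdvd' (Nat.card (⨁ i : ι, ZMod (p i ^ e i))) hcard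
    have : (φ g).2 = (Nat.card (⨁ i : ι, ZMod (p i ^ e i)) : ℤ) • h.2 := by rw [hh]; simp
    rw [this, natCast_zsmul, card_nsmul_eq_zero']
  calc φ g = ((φ g).1, (φ g).2) := rfl
  _ = 0 := by rw [h1, h2]; rfl

/-- If `g ⊗ 1 = 0` in `G ⊗ ℤ_p`, then `g` is divisible by `p ^ m` for every `m`. -/
lemma exists_smul_eq_of_tmul_eq_zero {G : Type*} [AddCommGroup G] (p m : ℕ) [Fact p.Prime]
    (g : G) (hg : (g ⊗ₜ[ℤ] (1 : ℤ_[p]) : TensorProduct ℤ G ℤ_[p]) = 0) :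
    ∃ h : G, g = ((p ^ m : ℕ) : ℤ) • h := by
  set N : Submodule ℤ G := LinearMap.range (((p ^ m : ℕ) : ℤ) • (LinearMap.id : G →ₗ[ℤ] G)) with hN
  have hmem : ∀ x : G, ((p ^ m : ℕ) : ℤ) • x ∈ N := fun x => ⟨x, rfl⟩
  have hQ : ∀ q : G ⧸ N, (p ^ m : ℕ) • q = 0 := by
    intro q
    obtain ⟨x, rfl⟩ := Submodule.Quotient.mk_surjective N q
    rw [← Submodule.Quotient.mk_smul]
    rw [Submodule.Quotient.mk_eq_zero]
    have : ((p ^ m : ℕ) : ℤ) • x = (p ^ m : ℕ) • x := natCast_zsmul x _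
    exact this ▸ hmem x
  letI : Module (ZMod (p ^ m)) (G ⧸ N) := AddCommGroup.zmodModule hQ
  have key : ∀ (c : ZMod (p ^ m)) (z : ℤ) (q : G ⧸ N), c • z • q = z • c • q := by
    intro c z q
    rw [← Int.cast_smul_eq_zsmul (ZMod (p ^ m)) z q, smul_smul, mul_comm, mul_smul,
      Int.cast_smul_eq_zsmul]
  let B : G →ₗ[ℤ] ℤ_[p] →ₗ[ℤ] G ⧸ N :=
    { toFun := fun x =>
        { toFun := fun a => (PadicInt.toZModPow m a) • (N.mkQ x)
          map_add' := fun a b => by rw [map_add, add_smul]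
          map_smul' := fun z a => by
            dsimp only [RingHom.id_apply]
            rw [map_zsmul, zsmul_eq_mul, mul_smul, Int.cast_smul_eq_zsmul] }
      map_add' := fun x y => by
        ext a
        simp only [LinearMap.coe_mk, AddHom.coe_mk, LinearMap.add_apply]
        rw [map_add, smul_add]
      map_smul' := fun z x => by
        ext a
        simp only [LinearMap.coe_mk, AddHom.coe_mk, RingHom.id_apply, LinearMap.smul_apply]
        rw [map_smul, key] }
  have h0 : TensorProduct.lift B (g ⊗ₜ[ℤ] (1 : ℤ_[p])) = N.mkQ g := by
    rw [TensorProduct.lift.tmul]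
    simp only [B, LinearMap.coe_mk, AddHom.coe_mk]
    rw [map_one, one_smul]
  rw [hg, map_zero] at h0
  have : g ∈ N := (Submodule.Quotient.mk_eq_zero N).mp h0.symm
  obtain ⟨h, hh⟩ := this
  rw [LinearMap.smul_apply, LinearMap.id_apply] at hh
  exact ⟨h, hh.symm⟩

/-- Divisibility by every prime power implies divisibility by every positive integer. -/
lemma divisible_of_prime_pow_divisible {G : Type*} [AddCommGroup G] (g : G)
    (hpp : ∀ p k : ℕ, Nat.Prime p → 0 < k → ∃ h : G, g = ((p ^ k : ℕ) : ℤ) • h) :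
    ∀ n : ℕ, 0 < n → ∃ h : G, g = (n : ℤ) • h := by
  intro n
  induction n using Nat.recOnPosPrimePosCoprime with
  | prime_pow p k hp hk => exact fun _ => hpp p k hp hk
  | zero => exact fun h => absurd h (lt_irrefl 0)
  | one => exact fun _ => ⟨g, by simp⟩
  | coprime a b ha hb hab iha ihb =>
    intro _
    obtain ⟨h₁, hh₁⟩ := iha (lt_trans one_pos ha)
    obtain ⟨h₂, hh₂⟩ := ihb (lt_trans one_pos hb)
    obtain ⟨u, v, huv⟩ := (Nat.isCoprime_iff_coprime.mpr hab)
    refine ⟨u • h₂ + v • h₁, ?_⟩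
    have hthis : g = (u * a + v * b) • g := by rw [huv, one_smul]
    conv_lhs => rw [hthis, add_smul, mul_smul, mul_smul]
    nth_rewrite 1 [hh₂]
    rw [hh₁, Nat.cast_mul]
    module

/-- Lemma 2.2 of the paper.
Let `⋯ → G₃ → G₂ → G₁` be an inverse system of finitely generated abelian
groups (indexed here by `ℕ`), with transition maps `f k : G (k+1) →+ G k`.
If for every prime `p` the inverse limit of the induced system
`(G k ⊗_ℤ ℤ_p, f k ⊗ id)` is the zero group, then the inverse limit of the
system `(G k, f k)` is the zero group: every compatible family `(x k)` is
identically zero. -/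
theorem limit_eq_zero_of_tensor_padic_limit_eq_zero
    (G : ℕ → Type*) [∀ k, AddCommGroup (G k)]
    (hG : ∀ k, AddGroup.FG (G k))
    (f : ∀ k, G (k + 1) →+ G k)
    (h : ∀ (p : ℕ) [Fact p.Prime],
      ∀ y : ∀ k, TensorProduct ℤ (G k) ℤ_[p],
        (∀ k, LinearMap.rTensor ℤ_[p] (f k).toIntLinearMap (y (k + 1)) = y k) →
        ∀ k, y k = 0)
    (x : ∀ k, G k) (hx : ∀ k, f k (x (k + 1)) = x k) :
    ∀ k, x k = 0 := by
  intro k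
  apply eq_zero_of_divisible (hG k)
  apply divisible_of_prime_pow_divisible
  intro p m hp hm
  haveI : Fact p.Prime := ⟨hp⟩
  let y : ∀ j, TensorProduct ℤ (G j) ℤ_[p] := fun j => x j ⊗ₜ[ℤ] (1 : ℤ_[p])
  have hy : ∀ j, LinearMap.rTensor ℤ_[p] (f j).toIntLinearMap (y (j + 1)) = y j := by
    intro j
    show LinearMap.rTensor ℤ_[p] (f j).toIntLinearMap (x (j + 1) ⊗ₜ[ℤ] (1 : ℤ_[p]))
      = x j ⊗ₜ[ℤ] (1 : ℤ_[p])
    rw [LinearMap.rTensor_tmul, AddMonoidHom.coe_toIntLinearMap, hx j]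
  have htmul : (x k ⊗ₜ[ℤ] (1 : ℤ_[p]) : TensorProduct ℤ (G k) ℤ_[p]) = 0 := h p y hy k
  exact exists_smul_eq_of_tmul_eq_zero p m (x k) htmul
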